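/- Let a > 0, ε > 0, b = −(2 + ε)a, and s = σ + iω ∈ ℂ with σ ≥ 0. Then |λ₁(s)| > 1, and consequently the convergence factor of the classical waveform relaxation algorithm with overlap n satisfies |ρ_{n,cla}(s)| = |1/λ₁(s)²|^{n+1} < 1 for every n ∈ ℕ. -/

import Mathlib

/-- The root `λ₁(s) = ((s - b) + √((b - s)² - 4a²))/(2a)` of the characteristic equation,
with the principal branch of the complex square root. -/
noncomputable def lam1 (a b : ℝ) (s : ℂ) : ℂ :=
  ((s - (b : ℂ)) + (((b : ℂ) - s) ^ 2 - 4 * (a : ℂ) ^ 2) ^ ((1 : ℂ) / 2)) / (2 * (a : ℂ))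

lemma re_cpow_half_nonneg (z : ℂ) : 0 ≤ (z ^ ((1 : ℂ) / 2)).re := by
  by_cases hz : z = 0
  · simp [hz, Complex.zero_cpow (by norm_num : (1 : ℂ) / 2 ≠ 0)]
  · rw [Complex.cpow_def_of_ne_zero hz, Complex.exp_re]
    apply mul_nonneg (Real.exp_pos _).le
    apply Real.cos_nonneg_of_mem_Icc
    have h1 := Complex.neg_pi_lt_arg z
    have h2 := Complex.arg_le_pi z
    have : (Complex.log z * (1 / 2)).im = z.arg / 2 := by
      simp [Complex.log_im]
      ring
    rw [this]
    constructor <;> [linarith; linarith]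

/-- For `a > 0`, `ε > 0`, `b = -(2 + ε)a` and `Re s ≥ 0` one has `|λ₁(s)| > 1`, and hence the
convergence factor of classical WR with overlap `n`, `ρ_{n,cla}(s) = (1/λ₁(s)²)^{n+1}`,
satisfies `|ρ_{n,cla}(s)| < 1` for all `n ∈ ℕ`. -/
theorem classical_wr_convergence_factor_lt_one (a ε : ℝ) (ha : 0 < a) (hε : 0 < ε)
    (s : ℂ) (hs : 0 ≤ s.re) :
    1 < ‖lam1 a (-(2 + ε) * a) s‖ ∧
    ∀ n : ℕ, ‖(1 / (lam1 a (-(2 + ε) * a) s) ^ 2) ^ (n + 1)‖ < 1 := by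
  set b : ℝ := -(2 + ε) * a with hb
  have hre : 1 < (lam1 a b s).re := by
    have hv := re_cpow_half_nonneg (((b : ℂ) - s) ^ 2 - 4 * (a : ℂ) ^ 2)
    have h2a : (2 * (a : ℂ)) = ((2 * a : ℝ) : ℂ) := by push_cast; ring
    rw [lam1, h2a, Complex.div_ofReal_re]
    rw [lt_div_iff₀ (by linarith : (0:ℝ) < 2*a)]
    have : ((s - (b : ℂ)) + (((b : ℂ) - s) ^ 2 - 4 * (a : ℂ) ^ 2) ^ ((1 : ℂ) / 2)).re
        = s.re - b + (((((b : ℂ) - s) ^ 2 - 4 * (a : ℂ) ^ 2) ^ ((1 : ℂ) / 2)).re) := by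
      simp
    rw [this, hb]
    nlinarith
  have habs : 1 < ‖lam1 a b s‖ :=
    lt_of_lt_of_le hre (Complex.re_le_norm _)
  refine ⟨habs, fun n => ?_⟩
  rw [norm_pow, norm_div, norm_one, norm_pow]
  have h1 : 1 / ‖lam1 a b s‖ ^ 2 < 1 := by
    rw [div_lt_one (by positivity)]
    nlinarith
  exact pow_lt_one₀ (by positivity) h1 (Nat.succ_ne_zero n)
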